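/- arXiv:1302.4241 — 3 statements merged into one kernel-verified Lean document; each statement's English description precedes it below -/
import Mathlib

section
/- Let φₘ, φₙ ∈ C²[0,π] satisfy φₖ'' + (λₖ² − 2λₖ p(x) − q(x))φₖ = 0 for k = m, n with distinct real λₘ ≠ λₙ, together with the boundary conditions φₖ'(0) − h φₖ(0) = 0 and φₖ'(π) + H φₖ(π) = 0. Then ∫₀^π (2p(x) − λₘ − λₙ) φₘ(x) φₙ(x) dx = 0. -/
open Real MeasureTheory intervalIntegral Set

theorem stmt_3 (φm φn p q : ℝ → ℝ) (lm ln h H : ℝ)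
    (hφm : ContDiff ℝ 2 φm) (hφn : ContDiff ℝ 2 φn)
    (hp : Continuous p) (hq : Continuous q)
    (hne : lm ≠ ln)
    (hODEm : ∀ x ∈ Icc (0:ℝ) π,
      deriv (deriv φm) x + (lm ^ 2 - 2 * lm * p x - q x) * φm x = 0)
    (hODEn : ∀ x ∈ Icc (0:ℝ) π,
      deriv (deriv φn) x + (ln ^ 2 - 2 * ln * p x - q x) * φn x = 0)
    (hbm0 : deriv φm 0 - h * φm 0 = 0) (hbmπ : deriv φm π + H * φm π = 0)
    (hbn0 : deriv φn 0 - h * φn 0 = 0) (hbnπ : deriv φn π + H * φn π = 0) :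
    ∫ x in (0:ℝ)..π, (2 * p x - lm - ln) * φm x * φn x = 0 := by
  have hm1 : ContDiff ℝ 1 (deriv φm) := by
    have := (contDiff_succ_iff_deriv.mp (by exact_mod_cast hφm : ContDiff ℝ (1+1) φm)).2.2
    exact this
  have hn1 : ContDiff ℝ 1 (deriv φn) := by
    have := (contDiff_succ_iff_deriv.mp (by exact_mod_cast hφn : ContDiff ℝ (1+1) φn)).2.2
    exact this
  set W : ℝ → ℝ := fun x => deriv φm x * φn x - deriv φn x * φm x with hW
  set g : ℝ → ℝ := fun x => deriv (deriv φm) x * φn x - deriv (deriv φn) x * φm x with hg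
  have hWd : ∀ x : ℝ, HasDerivAt W (g x) x := by
    intro x
    have h1 : HasDerivAt (deriv φm) (deriv (deriv φm) x) x :=
      (hm1.differentiable one_ne_zero x).hasDerivAt
    have h2 : HasDerivAt (deriv φn) (deriv (deriv φn) x) x :=
      (hn1.differentiable one_ne_zero x).hasDerivAt
    have h3 : HasDerivAt φm (deriv φm x) x :=
      (hφm.differentiable (by norm_num) x).hasDerivAt
    have h4 : HasDerivAt φn (deriv φn x) x :=
      (hφn.differentiable (by norm_num) x).hasDerivAt
    have := ((h1.mul h4).sub (h2.mul h3))
    convert this using 1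
    · rfl
    · rfl
    · rfl
    simp [hg]; ring
  have hgc : Continuous g := by
    have c1 : Continuous (deriv (deriv φm)) := hm1.continuous_deriv le_rfl
    have c2 : Continuous (deriv (deriv φn)) := hn1.continuous_deriv le_rfl
    exact ((c1.mul (hφn.continuous)).sub (c2.mul (hφm.continuous)))
  have hint : ∫ x in (0:ℝ)..π, g x = W π - W 0 :=
    intervalIntegral.integral_eq_sub_of_hasDerivAt (fun x _ => hWd x)
      (hgc.intervalIntegrable 0 π)
  have hW0 : W 0 = 0 := by
    have e1 : deriv φm 0 = h * φm 0 := by linarith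
    have e2 : deriv φn 0 = h * φn 0 := by linarith
    simp [hW, e1, e2]; ring
  have hWπ : W π = 0 := by
    have e1 : deriv φm π = -(H * φm π) := by linarith
    have e2 : deriv φn π = -(H * φn π) := by linarith
    simp [hW, e1, e2]; ring
  have hcong : ∫ x in (0:ℝ)..π, g x
      = ∫ x in (0:ℝ)..π, (lm - ln) * ((2 * p x - lm - ln) * φm x * φn x) := by
    apply intervalIntegral.integral_congr
    intro x hx
    rw [uIcc_of_le Real.pi_pos.le] at hx
    have em := hODEm x hx
    have en := hODEn x hx
    have em' : deriv (deriv φm) x = -((lm ^ 2 - 2 * lm * p x - q x) * φm x) := by linarith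
    have en' : deriv (deriv φn) x = -((ln ^ 2 - 2 * ln * p x - q x) * φn x) := by linarith
    simp only [hg, em', en']
    ring
  rw [hcong, intervalIntegral.integral_const_mul, hW0, hWπ] at hint
  have h0 : (lm - ln) * (∫ x in (0:ℝ)..π, (2 * p x - lm - ln) * φm x * φn x) = 0 := by
    simpa using hint
  rcases mul_eq_zero.mp h0 with h | h
  · exact absurd h (sub_ne_zero.mpr hne)
  · exact h
end

section
/- Let X and X̄ be double sequences in (0,π) with 0 < X₁ⁿ < ... < X_{n−1}ⁿ < π, satisfying Xₖⁿ = (k−1/2)π/n + O(1/n²) and X̄ₖⁿ = (k−1/2)π/n + O(1/n²) uniformly in k. Define Jₙ(x) = max{k : Xₖⁿ ≤ x} and J̄ₙ(x) = max{k : X̄ₖⁿ ≤ x}. Then for every x ∈ (0,π), |Jₙ(x) − J̄ₙ(x)| ≤ 1 for all sufficiently large n. -/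
open Real Filter

lemma stmt_11_aux (X Y : ℕ → ℕ → ℝ) (C C' : ℝ) (x : ℝ) (n : ℕ)
    (hn : 3 ≤ n) (hbig : C + C' ≤ n * π)
    (hX : ∀ k : ℕ, 1 ≤ k → k ≤ n - 1 → |X n k - ((k : ℝ) - 1/2) * π / n| ≤ C / n ^ 2)
    (hY : ∀ k : ℕ, 1 ≤ k → k ≤ n - 1 → |Y n k - ((k : ℝ) - 1/2) * π / n| ≤ C' / n ^ 2) :
    sSup {k : ℕ | 1 ≤ k ∧ k ≤ n - 1 ∧ X n k ≤ x} ≤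
      sSup {k : ℕ | 1 ≤ k ∧ k ≤ n - 1 ∧ Y n k ≤ x} + 1 := by
  set S : Set ℕ := {k : ℕ | 1 ≤ k ∧ k ≤ n - 1 ∧ X n k ≤ x} with hS
  set S' : Set ℕ := {k : ℕ | 1 ≤ k ∧ k ≤ n - 1 ∧ Y n k ≤ x} with hS'
  set j := sSup S with hj
  by_cases hj2 : j ≤ 1
  · omega
  push_neg at hj2
  have hne : S.Nonempty := by
    by_contra h
    rw [Set.not_nonempty_iff_eq_empty] at h
    rw [hj, h, csSup_empty] at hj2
    simp at hj2
  have hbdd : BddAbove S := ⟨n - 1, fun k hk => hk.2.1⟩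
  have hmem : j ∈ S := Nat.sSup_mem hne hbdd
  obtain ⟨hj1, hjn, hjx⟩ := hmem
  -- show j - 1 ∈ S'
  have hn0 : (0:ℝ) < n := by positivity
  have hkey : Y n (j - 1) ≤ x := by
    have h1 := hY (j - 1) (by omega) (by omega)
    have h2 := hX j hj1 hjn
    have hc1 : ((j - 1 : ℕ) : ℝ) = (j : ℝ) - 1 := by
      have : (1:ℕ) ≤ j := hj1
      push_cast [Nat.cast_sub this]; ring
    rw [hc1] at h1
    rw [abs_le] at h1 h2
    have e1 : Y n (j - 1) ≤ ((j : ℝ) - 1 - 1/2) * π / n + C' / n ^ 2 := by linarith [h1.2]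
    have e2 : ((j : ℝ) - 1/2) * π / n - C / n ^ 2 ≤ X n j := by linarith [h2.1]
    have e3 : ((j : ℝ) - 1 - 1/2) * π / n + C' / n ^ 2 ≤ ((j : ℝ) - 1/2) * π / n - C / n ^ 2 := by
      have h4 : C' / n ^ 2 + C / n ^ 2 ≤ π / n := by
        rw [← add_div, div_le_div_iff₀ (by positivity) hn0]
        nlinarith [mul_le_mul_of_nonneg_right hbig (le_of_lt hn0)]
      have h5 : ((j : ℝ) - 1 - 1/2) * π / n = ((j : ℝ) - 1/2) * π / n - π / n := by ring
      linarith
    linarith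
  have hmem' : j - 1 ∈ S' := ⟨by omega, by omega, hkey⟩
  have : j - 1 ≤ sSup S' := le_csSup ⟨n - 1, fun k hk => hk.2.1⟩ hmem'
  omega

theorem stmt_11 (X Y : ℕ → ℕ → ℝ)
    (hXmono : ∀ n : ℕ, ∀ k : ℕ, 1 ≤ k → k + 1 ≤ n - 1 → X n k < X n (k + 1))
    (hYmono : ∀ n : ℕ, ∀ k : ℕ, 1 ≤ k → k + 1 ≤ n - 1 → Y n k < Y n (k + 1))
    (hXrange : ∀ n : ℕ, 3 ≤ n → 0 < X n 1 ∧ X n (n - 1) < π)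
    (hYrange : ∀ n : ℕ, 3 ≤ n → 0 < Y n 1 ∧ Y n (n - 1) < π)
    (hX : ∃ C : ℝ, ∀ n : ℕ, 1 ≤ n → ∀ k : ℕ, 1 ≤ k → k ≤ n - 1 →
      |X n k - ((k : ℝ) - 1/2) * π / n| ≤ C / n ^ 2)
    (hY : ∃ C : ℝ, ∀ n : ℕ, 1 ≤ n → ∀ k : ℕ, 1 ≤ k → k ≤ n - 1 →
      |Y n k - ((k : ℝ) - 1/2) * π / n| ≤ C / n ^ 2)
    (J J' : ℕ → ℝ → ℕ)
    (hJ : ∀ n x, J n x = sSup {k : ℕ | 1 ≤ k ∧ k ≤ n - 1 ∧ X n k ≤ x})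
    (hJ' : ∀ n x, J' n x = sSup {k : ℕ | 1 ≤ k ∧ k ≤ n - 1 ∧ Y n k ≤ x}) :
    ∀ x ∈ Set.Ioo (0:ℝ) π, ∀ᶠ n : ℕ in atTop,
      |(J n x : ℤ) - (J' n x : ℤ)| ≤ 1 := by
  obtain ⟨C, hC⟩ := hX
  obtain ⟨C', hC'⟩ := hY
  intro x _
  have hev : ∀ᶠ n : ℕ in atTop, (C + C') / π ≤ (n : ℝ) :=
    tendsto_natCast_atTop_atTop.eventually_ge_atTop _
  filter_upwards [eventually_ge_atTop 3, hev] with n hn3 hnb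
  have hbig : C + C' ≤ (n : ℝ) * π := by
    rw [div_le_iff₀ Real.pi_pos] at hnb
    linarith
  have h1n : 1 ≤ n := by omega
  have h1 : J n x ≤ J' n x + 1 := by
    rw [hJ, hJ']
    exact stmt_11_aux X Y C C' x n hn3 hbig (hC n h1n) (hC' n h1n)
  have h2 : J' n x ≤ J n x + 1 := by
    rw [hJ, hJ']
    exact stmt_11_aux Y X C' C x n hn3 (by linarith) (hC' n h1n) (hC n h1n)
  rw [abs_le]
  constructor <;> [skip; skip] <;> omega
end

section
/- Suppose X and X̄ are double sequences with Xₖⁿ = (k − 1/2)π/n + O(1/n²) (case I asymptotics) and X̄ₖⁿ = kπ/n + O(1/n²) (case II asymptotics), uniformly in k. Then the quantity Sₙ(X,X̄) = n²π Σ_{k=1}^{n−1}|Lₖⁿ − L̄ₖⁿ| + n∫₀^π|p − p̄| does not remain bounded; more precisely, if n²Σₖ|Xₖⁿ − X̄ₖⁿ| is bounded below by c·n² · (π/(2n)) · n for some c > 0, then limsup Sₙ/(1+Sₙ) = 1, i.e. d_Σ(X,X̄) = 1. -/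
open Real MeasureTheory Filter

theorem stmt_18 (X Y : ℕ → ℕ → ℝ) (p p' : ℝ → ℝ)
    (hX0 : ∀ n : ℕ, 1 ≤ n → X n 0 = 0) (hXn : ∀ n : ℕ, 1 ≤ n → X n n = π)
    (hY0 : ∀ n : ℕ, 1 ≤ n → Y n 0 = 0) (hYn : ∀ n : ℕ, 1 ≤ n → Y n n = π)
    (hX : ∃ C : ℝ, ∀ n : ℕ, 1 ≤ n → ∀ k : ℕ, 1 ≤ k → k ≤ n - 1 →
      |X n k - ((k : ℝ) - 1/2) * π / n| ≤ C / n ^ 2)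
    (hY : ∃ C : ℝ, ∀ n : ℕ, 1 ≤ n → ∀ k : ℕ, 1 ≤ k → k ≤ n - 1 →
      |Y n k - (k : ℝ) * π / n| ≤ C / n ^ 2)
    (S : ℕ → ℝ)
    (hS : ∀ n : ℕ, S n = (n : ℝ) ^ 2 * π *
        (∑ k ∈ Finset.Icc 1 (n - 1),
          |(X n (k + 1) - X n k) - (Y n (k + 1) - Y n k)|)
      + n * ∫ x in Set.Ioo (0:ℝ) π, |p x - p' x|) :
    limsup (fun n => S n / (1 + S n)) atTop = 1 := by
  obtain ⟨Cx, hCx⟩ := hX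
  obtain ⟨Cy, hCy⟩ := hY
  -- Lower bound on S n for n ≥ 2
  have hlow : ∀ n : ℕ, 2 ≤ n → π ^ 2 / 2 * n - π * (Cx + Cy) ≤ S n := by
    intro n hn
    have hn1 : 1 ≤ n := by omega
    have hnpos : (0:ℝ) < n := by
      have : (2:ℝ) ≤ n := by exact_mod_cast hn
      linarith
    set f : ℕ → ℝ := fun k => (X n (k + 1) - X n k) - (Y n (k + 1) - Y n k) with hf
    set g : ℕ → ℝ := fun i => X n (i + 1) - Y n (i + 1) with hg
    have htel : ∑ k ∈ Finset.Icc 1 (n - 1), f k = Y n 1 - X n 1 := by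
      have h1 : ∑ k ∈ Finset.Icc 1 (n - 1), f k
          = ∑ i ∈ Finset.range (n - 1), f (1 + i) := by
        have hIcc : Finset.Icc 1 (n - 1) = Finset.Ico 1 n := by
          rw [← Finset.Ico_add_one_right_eq_Icc]
          congr 1
          omega
        rw [hIcc, Finset.sum_Ico_eq_sum_range]
      have h2 : ∀ i, f (1 + i) = g (i + 1) - g i := by
        intro i
        have : 1 + i = i + 1 := Nat.add_comm 1 i
        simp only [hf, hg, this]
        ring
      rw [h1]
      simp only [h2]
      rw [Finset.sum_range_sub g]
      have hnn : n - 1 + 1 = n := by omega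
      simp only [hg, hnn, hXn n hn1, hYn n hn1]
      ring
    have habs : |Y n 1 - X n 1| ≤ ∑ k ∈ Finset.Icc 1 (n - 1), |f k| := by
      rw [← htel]
      exact Finset.abs_sum_le_sum_abs _ _
    have hk1 : (1:ℕ) ≤ n - 1 := by omega
    have hXb := hCx n hn1 1 le_rfl hk1
    have hYb := hCy n hn1 1 le_rfl hk1
    have hX1 : X n 1 ≤ π / (2 * n) + Cx / n ^ 2 := by
      have h := (abs_le.mp hXb).2
      have e : (((1:ℕ):ℝ) - 1/2) * π / n = π / (2 * n) := by
        push_cast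
        field_simp
        ring
      rw [e] at h
      linarith
    have hY1 : π / n - Cy / n ^ 2 ≤ Y n 1 := by
      have h := (abs_le.mp hYb).1
      have e : ((1:ℕ):ℝ) * π / n = π / n := by push_cast; ring
      rw [e] at h
      linarith
    have hdiff : π / (2 * n) - (Cx + Cy) / n ^ 2 ≤ Y n 1 - X n 1 := by
      have hid : π / (n:ℝ) - π / (2 * n) = π / (2 * n) := by
        field_simp
        ring
      have hCsplit : (Cx + Cy) / (n:ℝ) ^ 2 = Cx / n ^ 2 + Cy / n ^ 2 := by ring
      linarith
    have hsum : π / (2 * n) - (Cx + Cy) / n ^ 2 ≤ ∑ k ∈ Finset.Icc 1 (n - 1), |f k| :=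
      le_trans hdiff (le_trans (le_abs_self _) habs)
    have hint : 0 ≤ ∫ x in Set.Ioo (0:ℝ) π, |p x - p' x| :=
      integral_nonneg fun x => abs_nonneg _
    have hπ : (0:ℝ) < π := Real.pi_pos
    have hmain : (n : ℝ) ^ 2 * π * (π / (2 * n) - (Cx + Cy) / n ^ 2)
        ≤ (n : ℝ) ^ 2 * π * ∑ k ∈ Finset.Icc 1 (n - 1), |f k| := by
      apply mul_le_mul_of_nonneg_left hsum
      positivity
    have heq : (n : ℝ) ^ 2 * π * (π / (2 * n) - (Cx + Cy) / n ^ 2)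
        = π ^ 2 / 2 * n - π * (Cx + Cy) := by
      field_simp
    rw [hS n]
    have hnint : 0 ≤ (n : ℝ) * ∫ x in Set.Ioo (0:ℝ) π, |p x - p' x| := by
      exact mul_nonneg hnpos.le hint
    calc π ^ 2 / 2 * n - π * (Cx + Cy)
        = (n : ℝ) ^ 2 * π * (π / (2 * n) - (Cx + Cy) / n ^ 2) := heq.symm
      _ ≤ (n : ℝ) ^ 2 * π * ∑ k ∈ Finset.Icc 1 (n - 1), |f k| := hmain
      _ ≤ _ := le_add_of_nonneg_right hnint
  -- S tends to infinity
  have hST : Tendsto S atTop atTop := by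
    apply tendsto_atTop_mono' atTop
      (Filter.eventually_atTop.mpr ⟨2, fun n hn => hlow n hn⟩)
    have h1 : Tendsto (fun n : ℕ => (n : ℝ)) atTop atTop :=
      tendsto_natCast_atTop_atTop
    have h2 : Tendsto (fun n : ℕ => π ^ 2 / 2 * (n : ℝ)) atTop atTop := by
      apply Tendsto.const_mul_atTop _ h1
      positivity
    exact tendsto_atTop_add_const_right _ _ h2
  -- Conclude the limsup
  have h1S : Tendsto (fun n => 1 + S n) atTop atTop :=
    tendsto_atTop_add_const_left _ 1 hST
  have hinv : Tendsto (fun n => (1 + S n)⁻¹) atTop (nhds 0) :=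
    h1S.inv_tendsto_atTop
  have hsub : Tendsto (fun n => 1 - (1 + S n)⁻¹) atTop (nhds 1) := by
    have h := (tendsto_const_nhds :
      Tendsto (fun _ : ℕ => (1:ℝ)) atTop (nhds 1)).sub hinv
    simpa using h
  have heq : ∀ᶠ n in atTop, S n / (1 + S n) = 1 - (1 + S n)⁻¹ := by
    filter_upwards [h1S.eventually_gt_atTop 0] with n hn
    field_simp
    ring
  have : Tendsto (fun n => S n / (1 + S n)) atTop (nhds 1) :=
    Tendsto.congr' (heq.mono fun n h => h.symm) hsub
  exact this.limsup_eq
end
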